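/- Let m, n ≥ 1 and let 𝒢 be an m×m matrix whose entries are polynomials in n variables with complex coefficients. Suppose there exist t₀ > 0, C > 0, k > 0 and l ∈ ℕ such that ‖exp(t₀ 𝒢(iζ))‖ ≤ C(1+|ζ|)^l e^{k|Im ζ|} for all ζ ∈ ℂⁿ. Then there exists K > 0 such that max{Re λ : λ ∈ σ(𝒢(iζ))} ≤ K(1+|ζ|) for all ζ ∈ ℂⁿ. -/

import Mathlib

open scoped Matrix.Norms.L2Operator

/-- Evaluation of a matrix of multivariate polynomials at a point of `ℂⁿ`. -/
noncomputable def polyMatEval {m n : ℕ}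
    (𝒢 : Matrix (Fin m) (Fin m) (MvPolynomial (Fin n) ℂ)) (ζ : Fin n → ℂ) :
    Matrix (Fin m) (Fin m) ℂ :=
  𝒢.map (MvPolynomial.eval ζ)

/-- The componentwise imaginary part of `ζ ∈ ℂⁿ`, regarded as a vector of `ℝⁿ`
with Euclidean norm. -/
noncomputable def imVec {n : ℕ} (ζ : EuclideanSpace ℂ (Fin n)) :
    EuclideanSpace ℝ (Fin n) :=
  WithLp.toLp 2 (fun j => (ζ j).im)

lemma imVec_norm_le {n : ℕ} (ζ : EuclideanSpace ℂ (Fin n)) : ‖imVec ζ‖ ≤ ‖ζ‖ := by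
  rw [EuclideanSpace.norm_eq, EuclideanSpace.norm_eq]
  apply Real.sqrt_le_sqrt
  apply Finset.sum_le_sum
  intro i _
  have : ‖(imVec ζ) i‖ ≤ ‖ζ i‖ := by
    simpa [imVec] using Complex.abs_im_le_norm (ζ i)
  exact pow_le_pow_left₀ (norm_nonneg _) this 2

/-- Section 5, intermediate step: a Paley–Wiener type bound on `exp(t₀𝒢(iζ))` forces the
linear bound `max Re σ(𝒢(iζ)) ≤ K(1+|ζ|)` on all of `ℂⁿ`. -/
theorem spectral_linear_bound_of_exp_PW_bound (m n : ℕ) (hm : 1 ≤ m) (hn : 1 ≤ n)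
    (𝒢 : Matrix (Fin m) (Fin m) (MvPolynomial (Fin n) ℂ))
    (t₀ C k : ℝ) (ht₀ : 0 < t₀) (hC : 0 < C) (hk : 0 < k) (l : ℕ)
    (hbound : ∀ ζ : EuclideanSpace ℂ (Fin n),
      ‖NormedSpace.exp (t₀ • polyMatEval 𝒢 (fun j => Complex.I * ζ j))‖ ≤
        C * (1 + ‖ζ‖) ^ l * Real.exp (k * ‖imVec ζ‖)) :
    ∃ K : ℝ, 0 < K ∧ ∀ ζ : EuclideanSpace ℂ (Fin n),
      ∀ lam ∈ spectrum ℂ (polyMatEval 𝒢 (fun j => Complex.I * ζ j)),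
        lam.re ≤ K * (1 + ‖ζ‖) := by
  haveI : Nonempty (Fin m) := Fin.pos_iff_nonempty.mp hm
  haveI : NormOneClass (Matrix (Fin m) (Fin m) ℂ) := ⟨CStarRing.norm_one⟩
  refine ⟨(|Real.log C| + l + k + 1) / t₀, by positivity, fun ζ lam hlam => ?_⟩
  set A := polyMatEval 𝒢 (fun j => Complex.I * ζ j) with hA
  -- t₀ • A = (t₀ : ℂ) • A
  have hsmul : (t₀ : ℂ) • A = t₀ • A := by
    ext i j; simp [Matrix.smul_apply, Complex.real_smul]
  -- t₀ * lam ∈ spectrum of t₀ • A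
  have ht₀ne : (t₀ : ℂ) ≠ 0 := by exact_mod_cast ht₀.ne'
  have hmem : (t₀ : ℂ) * lam ∈ spectrum ℂ (t₀ • A) := by
    rw [← hsmul]
    have := (spectrum.smul_mem_smul_iff (a := A) (s := lam)
      (r := Units.mk0 (t₀ : ℂ) ht₀ne)).mpr hlam
    simpa [Units.smul_def, smul_eq_mul] using this
  have hexp : NormedSpace.exp ((t₀ : ℂ) * lam) ∈
      spectrum ℂ (NormedSpace.exp (t₀ • A)) :=
    spectrum.exp_mem_exp _ hmem
  have hnorm : ‖NormedSpace.exp ((t₀ : ℂ) * lam)‖ ≤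
      ‖NormedSpace.exp (t₀ • A)‖ := spectrum.norm_le_norm_of_mem hexp
  have hval : ‖NormedSpace.exp ((t₀ : ℂ) * lam)‖ = Real.exp (t₀ * lam.re) := by
    rw [← Complex.exp_eq_exp_ℂ, Complex.norm_exp]
    norm_num
  have key : Real.exp (t₀ * lam.re) ≤ C * (1 + ‖ζ‖) ^ l * Real.exp (k * ‖imVec ζ‖) :=
    hval ▸ hnorm.trans (hbound ζ)
  have hpos : (0:ℝ) < C * (1 + ‖ζ‖) ^ l * Real.exp (k * ‖imVec ζ‖) := by positivity
  have hlog : t₀ * lam.re ≤ Real.log (C * (1 + ‖ζ‖) ^ l * Real.exp (k * ‖imVec ζ‖)) := by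
    rw [← Real.log_exp (t₀ * lam.re)]
    exact Real.log_le_log (Real.exp_pos _) key
  have h1ζ : (0:ℝ) ≤ ‖ζ‖ := norm_nonneg _
  have hlogsum : Real.log (C * (1 + ‖ζ‖) ^ l * Real.exp (k * ‖imVec ζ‖)) =
      Real.log C + l * Real.log (1 + ‖ζ‖) + k * ‖imVec ζ‖ := by
    rw [Real.log_mul (by positivity) (Real.exp_pos _).ne',
      Real.log_mul hC.ne' (by positivity), Real.log_pow, Real.log_exp]
  have hlog1 : Real.log (1 + ‖ζ‖) ≤ ‖ζ‖ := by
    have := Real.log_le_sub_one_of_pos (x := 1 + ‖ζ‖) (by positivity)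
    linarith
  have him : ‖imVec ζ‖ ≤ ‖ζ‖ := imVec_norm_le ζ
  have : t₀ * lam.re ≤ (|Real.log C| + l + k + 1) * (1 + ‖ζ‖) := by
    rw [hlogsum] at hlog
    have h1 : Real.log C ≤ |Real.log C| := le_abs_self _
    have h2 : (l:ℝ) * Real.log (1 + ‖ζ‖) ≤ l * ‖ζ‖ :=
      mul_le_mul_of_nonneg_left hlog1 (Nat.cast_nonneg l)
    have h3 : k * ‖imVec ζ‖ ≤ k * ‖ζ‖ := mul_le_mul_of_nonneg_left him hk.le
    have habs : (0:ℝ) ≤ |Real.log C| := abs_nonneg _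
    nlinarith [abs_nonneg (Real.log C)]
  rw [div_mul_eq_mul_div, le_div_iff₀ ht₀]
  linarith
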